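/- Let U₁ and U₂ be independent random variables with values in a measurable space Λ, let A, B, B̃ ⊆ Λ be measurable sets, let h : Λ × Λ → [0,∞) be measurable, and set Δ = inf over (x, y, ỹ) ∈ A × B × B̃ of |h(x,y) − h(x,ỹ)|. If U₁ ∈ A almost surely, then the conditional variance satisfies Var[h(U₁,U₂) | σ(U₁)] ≥ (Δ²/4)·(P(U₂ ∈ B) ∧ P(U₂ ∈ B̃)). -/

import Mathlib

open MeasureTheory ProbabilityTheory

/-- Cauchy-Schwarz: on a probability space, `(∫ f)² ≤ ∫ f²`. -/
lemma sq_integral_le_integral_sq {Λ : Type*} [MeasurableSpace Λ] {ν : Measure Λ}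
    [IsProbabilityMeasure ν] {f : Λ → ℝ} (hf : AEStronglyMeasurable f ν)
    (h2 : Integrable (fun y => f y ^ 2) ν) : (∫ y, f y ∂ν) ^ 2 ≤ ∫ y, f y ^ 2 ∂ν := by
  have hfi : Integrable f ν := by
    refine Integrable.mono ((integrable_const (1:ℝ)).add h2) hf (ae_of_all _ fun y => ?_)
    have h1 : |f y| ≤ 1 + f y ^ 2 := by nlinarith [abs_nonneg (f y), sq_abs (f y)]
    have h2' : (0:ℝ) ≤ 1 + f y ^ 2 := by positivity
    simpa [Real.norm_eq_abs, abs_of_nonneg h2'] using h1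
  set c := ∫ y, f y ∂ν with hc
  have hexp : ∀ y, (f y - c) ^ 2 = f y ^ 2 - (2 * c) * f y + c ^ 2 := fun y => by ring
  have hnn : (0:ℝ) ≤ ∫ y, (f y - c) ^ 2 ∂ν := integral_nonneg fun y => sq_nonneg _
  have : ∫ y, (f y - c) ^ 2 ∂ν = (∫ y, f y ^ 2 ∂ν) - c ^ 2 := by
    simp_rw [hexp]
    have e0 : Integrable (fun y => 2 * c * f y) ν := hfi.const_mul (2*c)
    have e1 : Integrable (fun y => f y ^ 2 - 2 * c * f y) ν := h2.sub e0
    rw [integral_add e1 (integrable_const _), integral_sub h2 e0, integral_const_mul,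
      integral_const]
    simp only [measure_univ, ENNReal.toReal_one, probReal_univ, smul_eq_mul, one_mul, ← hc]
    ring
  linarith [this ▸ hnn]

/-- If the joint law of `(U₁, U₂)` is the product of the marginal laws, then the conditional
expectation of `ψ (U₁, U₂)` given `σ(U₁)` is obtained by integrating out the second variable. -/
lemma condexp_comap_of_map_prod_eq {Ω Λ : Type*} [MeasurableSpace Ω] [MeasurableSpace Λ]
    (μ : Measure Ω) [IsProbabilityMeasure μ] (U₁ U₂ : Ω → Λ)
    (hU₁ : Measurable U₁) (hU₂ : Measurable U₂)
    (hprod : μ.map (fun ω => (U₁ ω, U₂ ω)) = (μ.map U₁).prod (μ.map U₂))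
    (ψ : Λ × Λ → ℝ) (hψ : StronglyMeasurable ψ)
    (hψint : Integrable ψ ((μ.map U₁).prod (μ.map U₂))) :
    μ[(fun ω => ψ (U₁ ω, U₂ ω)) | MeasurableSpace.comap U₁ inferInstance]
      =ᵐ[μ] fun ω => ∫ y, ψ (U₁ ω, y) ∂(μ.map U₂) := by
  haveI : IsProbabilityMeasure (μ.map U₁) := Measure.isProbabilityMeasure_map hU₁.aemeasurable
  haveI : IsProbabilityMeasure (μ.map U₂) := Measure.isProbabilityMeasure_map hU₂.aemeasurable
  have hm : MeasurableSpace.comap U₁ inferInstance ≤ (inferInstance : MeasurableSpace Ω) :=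
    hU₁.comap_le
  haveI : SigmaFinite (μ.trim hm) := inferInstance
  have hpair : Measurable (fun ω => (U₁ ω, U₂ ω)) := hU₁.prodMk hU₂
  set ν := μ.map U₂ with hν
  set g : Λ → ℝ := fun x => ∫ y, ψ (x, y) ∂ν with hg
  have hgsm : StronglyMeasurable g := hψ.integral_prod_right'
  have hcomp : Integrable (fun ω => ψ (U₁ ω, U₂ ω)) μ := by
    have := (integrable_map_measure hψ.aestronglyMeasurable hpair.aemeasurable).mp
      (hprod ▸ hψint)
    exact this
  have hgint : Integrable (fun ω => g (U₁ ω)) μ :=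
    (integrable_map_measure hgsm.aestronglyMeasurable hU₁.aemeasurable).mp
      hψint.integral_prod_left
  refine (ae_eq_condExp_of_forall_setIntegral_eq hm hcomp
    (fun s _ _ => hgint.integrableOn) (fun s hs _ => ?_) ?_).symm
  · obtain ⟨t, ht, rfl⟩ := hs
    have h1 : ∫ ω in U₁ ⁻¹' t, g (U₁ ω) ∂μ = ∫ x in t, g x ∂(μ.map U₁) :=
      (setIntegral_map ht hgsm.aestronglyMeasurable hU₁.aemeasurable).symm
    have hpre : (fun ω => (U₁ ω, U₂ ω)) ⁻¹' (t ×ˢ Set.univ) = U₁ ⁻¹' t := by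
      ext ω; simp
    have h2 : ∫ ω in U₁ ⁻¹' t, ψ (U₁ ω, U₂ ω) ∂μ
        = ∫ p in t ×ˢ Set.univ, ψ p ∂((μ.map U₁).prod ν) := by
      rw [← hprod, ← hpre,
        setIntegral_map (ht.prod MeasurableSet.univ) hψ.aestronglyMeasurable
          hpair.aemeasurable]
    have h3 : ∫ p in t ×ˢ Set.univ, ψ p ∂((μ.map U₁).prod ν)
        = ∫ x in t, ∫ y in Set.univ, ψ (x, y) ∂ν ∂(μ.map U₁) :=
      setIntegral_prod ψ hψint.integrableOn
    rw [h1, h2, h3]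
    simp [hg]
  · exact StronglyMeasurable.aestronglyMeasurable (hgsm.comp_measurable
      (Measurable.of_comap_le le_rfl))

/-- General variance lower bound: if `U₁, U₂` are independent `Λ`-valued random variables,
`A, B, B̃` are measurable sets, `Δ = inf {|h(x,y) - h(x,ỹ)| : x ∈ A, y ∈ B, ỹ ∈ B̃}`, and
`U₁ ∈ A` almost surely, then a.s. the conditional variance of `h(U₁,U₂)` given `σ(U₁)` is at
least `(Δ²/4) · min(P(U₂ ∈ B), P(U₂ ∈ B̃))`. -/
theorem general_variance_lower_bound
    {Ω Λ : Type*} [MeasurableSpace Ω] [MeasurableSpace Λ]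
    (μ : Measure Ω) [IsProbabilityMeasure μ]
    (U₁ U₂ : Ω → Λ) (hU₁ : Measurable U₁) (hU₂ : Measurable U₂)
    (hindep : IndepFun U₁ U₂ μ)
    (A B B' : Set Λ) (hA : MeasurableSet A) (hB : MeasurableSet B) (hB' : MeasurableSet B')
    (h : Λ × Λ → ℝ) (hmeas : Measurable h) (hnonneg : ∀ z, 0 ≤ h z)
    (hint : Integrable (fun ω => (h (U₁ ω, U₂ ω)) ^ 2) μ)
    (Δ : ℝ)
    (hΔ : Δ = sInf {r : ℝ | ∃ x ∈ A, ∃ y ∈ B, ∃ y' ∈ B', r = |h (x, y) - h (x, y')|})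
    (hAas : ∀ᵐ ω ∂μ, U₁ ω ∈ A) :
    ∀ᵐ ω ∂μ,
      (μ[fun ω' => (h (U₁ ω', U₂ ω')
            - (μ[fun ω'' => h (U₁ ω'', U₂ ω'') | MeasurableSpace.comap U₁ inferInstance]) ω') ^ 2
          | MeasurableSpace.comap U₁ inferInstance]) ω
        ≥ Δ ^ 2 / 4 * min (μ (U₂ ⁻¹' B)).toReal (μ (U₂ ⁻¹' B')).toReal := by
  haveI : IsProbabilityMeasure (μ.map U₁) := Measure.isProbabilityMeasure_map hU₁.aemeasurable
  haveI : IsProbabilityMeasure (μ.map U₂) := Measure.isProbabilityMeasure_map hU₂.aemeasurable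
  set ρ := μ.map U₁ with hρ
  set ν := μ.map U₂ with hν
  have hpair : Measurable (fun ω => (U₁ ω, U₂ ω)) := hU₁.prodMk hU₂
  have hprod : μ.map (fun ω => (U₁ ω, U₂ ω)) = ρ.prod ν :=
    (indepFun_iff_map_prod_eq_prod_map_map hU₁.aemeasurable hU₂.aemeasurable).mp hindep
  -- Δ is nonnegative
  have hΔnn : 0 ≤ Δ := by
    rw [hΔ]
    exact Real.sInf_nonneg fun r hr => by
      obtain ⟨x, _, y, _, y', _, rfl⟩ := hr; exact abs_nonneg _
  have hSbdd : BddBelow {r : ℝ | ∃ x ∈ A, ∃ y ∈ B, ∃ y' ∈ B', r = |h (x, y) - h (x, y')|} :=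
    ⟨0, fun r hr => by obtain ⟨x, _, y, _, y', _, rfl⟩ := hr; exact abs_nonneg _⟩
  -- integrability of h and h² on the product of the laws
  have hh2prod : Integrable (fun p => h p ^ 2) (ρ.prod ν) := by
    rw [← hprod]
    exact (integrable_map_measure ((hmeas.pow_const 2).aestronglyMeasurable)
      hpair.aemeasurable).mpr hint
  have hhprod : Integrable h (ρ.prod ν) := by
    refine Integrable.mono ((integrable_const (1:ℝ)).add hh2prod)
      hmeas.aestronglyMeasurable (Filter.Eventually.of_forall fun p => ?_)
    have h1 : |h p| ≤ 1 + h p ^ 2 := by nlinarith [abs_nonneg (h p), sq_abs (h p)]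
    have h2 : (0:ℝ) ≤ 1 + h p ^ 2 := by positivity
    simpa [Real.norm_eq_abs, abs_of_nonneg h2] using h1
  set g : Λ → ℝ := fun x => ∫ y, h (x, y) ∂ν with hgdef
  have hgsm : StronglyMeasurable g := hmeas.stronglyMeasurable.integral_prod_right'
  set g₂ : Λ → ℝ := fun x => ∫ y, h (x, y) ^ 2 ∂ν with hg2def
  have hg2sm : StronglyMeasurable g₂ :=
    (hmeas.pow_const 2).stronglyMeasurable.integral_prod_right'
  have hg2int : Integrable g₂ ρ := hh2prod.integral_prod_left
  have hg2nn : ∀ x, 0 ≤ g₂ x := fun x => integral_nonneg fun y => sq_nonneg _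
  have hg2ae : ∀ᵐ x ∂ρ, g x ^ 2 ≤ g₂ x := by
    filter_upwards [hh2prod.prod_right_ae] with x hx
    exact sq_integral_le_integral_sq
      ((hmeas.comp (measurable_const.prodMk measurable_id)).aestronglyMeasurable) hx
  have hmapfst : (ρ.prod ν).map Prod.fst = ρ := by
    rw [Measure.map_fst_prod]; simp
  set F : Λ × Λ → ℝ := fun p => (h p - g p.1) ^ 2 with hFdef
  have hFm : Measurable F := (hmeas.sub (hgsm.measurable.comp measurable_fst)).pow_const 2
  have hg2fst : ∀ᵐ p ∂(ρ.prod ν), g p.1 ^ 2 ≤ g₂ p.1 := by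
    rw [← hmapfst] at hg2ae
    exact ae_of_ae_map measurable_fst.aemeasurable hg2ae
  have hg2fstint : Integrable (fun p => g₂ p.1) (ρ.prod ν) := by
    rw [← hmapfst] at hg2int
    exact (integrable_map_measure hg2sm.aestronglyMeasurable
      measurable_fst.aemeasurable).mp hg2int
  have hFprod : Integrable F (ρ.prod ν) := by
    refine Integrable.mono ((hh2prod.const_mul 2).add (hg2fstint.const_mul 2))
      hFm.aestronglyMeasurable ?_
    filter_upwards [hg2fst] with p hp
    have h1 : F p ≤ 2 * h p ^ 2 + 2 * g₂ p.1 := by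
      have := sq_nonneg (h p + g p.1); simp only [hFdef]; nlinarith
    have h2 : (0:ℝ) ≤ F p := sq_nonneg _
    calc ‖F p‖ = F p := by rw [Real.norm_eq_abs, abs_of_nonneg h2]
      _ ≤ 2 * h p ^ 2 + 2 * g₂ p.1 := h1
      _ ≤ ‖2 * h p ^ 2 + 2 * g₂ p.1‖ := le_abs_self _
  have hM := condexp_comap_of_map_prod_eq μ U₁ U₂ hU₁ hU₂ hprod h
    hmeas.stronglyMeasurable hhprod
  have hCV := condexp_comap_of_map_prod_eq μ U₁ U₂ hU₁ hU₂ hprod F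
    hFm.stronglyMeasurable hFprod
  have hcongr : (fun ω' => (h (U₁ ω', U₂ ω')
        - (μ[fun ω'' => h (U₁ ω'', U₂ ω'') | MeasurableSpace.comap U₁ inferInstance]) ω') ^ 2)
      =ᵐ[μ] fun ω' => F (U₁ ω', U₂ ω') := by
    filter_upwards [hM] with ω hω
    simp only [hFdef, hω, hgdef, hν]
  have hfinal := (condExp_congr_ae (m := MeasurableSpace.comap U₁ inferInstance)
    hcongr).trans hCV
  have hBmap : μ (U₂ ⁻¹' B) = ν B := (Measure.map_apply hU₂ hB).symm
  have hB'map : μ (U₂ ⁻¹' B') = ν B' := (Measure.map_apply hU₂ hB').symm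
  filter_upwards [hfinal, hAas, ae_of_ae_map hU₁.aemeasurable hFprod.prod_right_ae]
    with ω heq hωA hFint
  rw [ge_iff_le, heq, hBmap, hB'map]
  set x := U₁ ω with hx
  -- key: lower bound the integral given the pointwise bound on a set C
  have key : ∀ C : Set Λ, MeasurableSet C →
      min (ν B).toReal (ν B').toReal ≤ (ν C).toReal →
      (∀ y ∈ C, Δ ^ 2 / 4 ≤ (h (x, y) - g x) ^ 2) →
      Δ ^ 2 / 4 * min (ν B).toReal (ν B').toReal ≤ ∫ y, F (x, y) ∂ν := by
    intro C hC hminC hptC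
    have h1 : Δ ^ 2 / 4 * (ν C).toReal ≤ ∫ y in C, F (x, y) ∂ν := by
      have hconst : IntegrableOn (fun _ : Λ => Δ ^ 2 / 4) C ν :=
        integrableOn_const
      have := setIntegral_mono_on hconst hFint.integrableOn hC hptC
      rwa [setIntegral_const, smul_eq_mul, mul_comm] at this
    have h2 : ∫ y in C, F (x, y) ∂ν ≤ ∫ y, F (x, y) ∂ν :=
      setIntegral_le_integral hFint (ae_of_all _ fun y => sq_nonneg _)
    calc Δ ^ 2 / 4 * min (ν B).toReal (ν B').toReal
        ≤ Δ ^ 2 / 4 * (ν C).toReal := by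
          apply mul_le_mul_of_nonneg_left hminC; positivity
      _ ≤ ∫ y in C, F (x, y) ∂ν := h1
      _ ≤ ∫ y, F (x, y) ∂ν := h2
  by_cases hcase : ∀ y ∈ B, Δ ^ 2 / 4 ≤ (h (x, y) - g x) ^ 2
  · exact key B hB (min_le_left _ _) hcase
  · push_neg at hcase
    obtain ⟨y₀, hy₀B, hy₀⟩ := hcase
    refine key B' hB' (min_le_right _ _) fun y' hy' => ?_
    by_contra hlt
    push_neg at hlt
    have hmem : |h (x, y₀) - h (x, y')|
        ∈ {r : ℝ | ∃ x ∈ A, ∃ y ∈ B, ∃ y' ∈ B', r = |h (x, y) - h (x, y')|} :=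
      ⟨x, hωA, y₀, hy₀B, y', hy', rfl⟩
    have hΔle : Δ ≤ |h (x, y₀) - h (x, y')| := hΔ ▸ csInf_le hSbdd hmem
    have habs := sq_abs (h (x, y₀) - h (x, y'))
    nlinarith [sq_nonneg (h (x, y₀) - g x + (h (x, y') - g x)),
      sq_nonneg (h (x, y₀) - h (x, y')), abs_nonneg (h (x, y₀) - h (x, y'))]
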